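/- For a k-dimensional tensor code C ≤ F with minimum tensor-rank distance d and tensor rank trk(C), the generalized tensor weights with respect to perfect spaces satisfy t_j^ps(C) ≤ trk(C) + k − j and t_j^ps(C) ≥ d + j − 1 for all j ∈ {1,...,k}. -/

import Mathlib

open scoped Classical

noncomputable section

namespace TensorCodes

/-- The Gaussian (`q`-binomial) coefficient for integer arguments, following the
definition in the paper. -/
def qbin (q : ℚ) (a b : ℤ) : ℚ :=
  if b < 0 then 0
  else if b = 0 then 1
  else if a < 0 then
    (-1) ^ b.toNat * q ^ (a * b - b * (b - 1) / 2) *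
      ∏ i ∈ Finset.range b.toNat, (q ^ (-a + b - 1 - (i : ℤ)) - 1) / (q ^ ((i : ℤ) + 1) - 1)
  else if a < b then 0
  else ∏ i ∈ Finset.range b.toNat, (q ^ (a - (i : ℤ)) - 1) / (q ^ ((i : ℤ) + 1) - 1)

variable {K : Type} [Field K] [Fintype K] {r : ℕ} {n : Fin r → ℕ}

/-- A simple (rank-one) tensor `u⁽¹⁾ ⊗ ⋯ ⊗ u⁽ʳ⁾`, in the identification of
`𝔽_q^{n_1} ⊗ ⋯ ⊗ 𝔽_q^{n_r}` with the space of `r`-dimensional arrays. -/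
def simpleTensor (u : ∀ i, Fin (n i) → K) : ((i : Fin r) → Fin (n i)) → K :=
  fun J => ∏ i, u i (J i)

/-- The tensor product `U₁ ⊗ ⋯ ⊗ U_r` of subspaces `U i ≤ 𝔽_q^{n_i}`, identified with the
subspace of the array space spanned by the corresponding simple tensors. -/
def tp (U : ∀ i, Submodule K (Fin (n i) → K)) :
    Submodule K (((i : Fin r) → Fin (n i)) → K) :=
  Submodule.span K {X | ∃ u : ∀ i, Fin (n i) → K, (∀ i, u i ∈ U i) ∧ X = simpleTensor u}

/-- The dual (orthogonal complement) of a tensor code with respect to the nondegenerate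
bilinear form `X * Y = ∑_J X_J Y_J`. -/
def tdual (C : Submodule K (((i : Fin r) → Fin (n i)) → K)) :
    Submodule K (((i : Fin r) → Fin (n i)) → K) where
  carrier := {X | ∀ Y ∈ C, ∑ J, X J * Y J = 0}
  add_mem' := by
    intro a b ha hb Y hY
    have h : ∑ J, (a J * Y J + b J * Y J) = 0 := by
      rw [Finset.sum_add_distrib, ha Y hY, hb Y hY, add_zero]
    simpa [add_mul] using h
  zero_mem' := by intro Y hY; simp
  smul_mem' := by
    intro c a ha Y hY
    have h := ha Y hY
    simp only [Pi.smul_apply, smul_eq_mul, mul_assoc]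
    rw [← Finset.mul_sum, h, mul_zero]

/-- The orthogonal complement of a subspace of `𝔽_q^m` with respect to the dot product. -/
def vdual {m : ℕ} (U : Submodule K (Fin m → K)) : Submodule K (Fin m → K) where
  carrier := {x | ∀ y ∈ U, ∑ t, x t * y t = 0}
  add_mem' := by
    intro a b ha hb y hy
    have h : ∑ t, (a t * y t + b t * y t) = 0 := by
      rw [Finset.sum_add_distrib, ha y hy, hb y hy, add_zero]
    simpa [add_mul] using h
  zero_mem' := by intro y hy; simp
  smul_mem' := by
    intro c a ha y hy
    have h := ha y hy
    simp only [Pi.smul_apply, smul_eq_mul, mul_assoc]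
    rw [← Finset.mul_sum, h, mul_zero]

/-- A subspace is perfect if it is spanned by the simple (rank-one) tensors it contains. -/
def IsPerfect (A : Submodule K (((i : Fin r) → Fin (n i)) → K)) : Prop :=
  A = Submodule.span K ((A : Set (((i : Fin r) → Fin (n i)) → K)) ∩
    {X | ∃ u : ∀ i, Fin (n i) → K, X = simpleTensor u})

/-- The tensor rank of an `r`-tensor: the least number of simple tensors summing to it. -/
def trank (X : ((i : Fin r) → Fin (n i)) → K) : ℕ :=
  sInf {R | ∃ u : Fin R → ∀ i, Fin (n i) → K, X = ∑ s, simpleTensor (u s)}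

/-- The minimum tensor-rank distance of a (nonzero) tensor code. -/
def minDist (C : Submodule K (((i : Fin r) → Fin (n i)) → K)) : ℕ :=
  sInf {d | ∃ X ∈ C, X ≠ (0 : ((i : Fin r) → Fin (n i)) → K) ∧ trank X = d}

/-- The tensor rank of a tensor code: the minimum dimension of a perfect space containing it. -/
def trk (C : Submodule K (((i : Fin r) → Fin (n i)) → K)) : ℕ :=
  sInf {a | ∃ A : Submodule K (((i : Fin r) → Fin (n i)) → K),
    IsPerfect A ∧ C ≤ A ∧ Module.finrank K ↥A = a}

/-- The `j`-th generalized tensor weight of `C` with respect to a collection `𝒜` of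
anticodes:  the minimum dimension of a member of `𝒜` meeting `C` in dimension at least `j`. -/
def genW {V : Type} [AddCommGroup V] [Module K V] (𝒜 : Set (Submodule K V))
    (C : Submodule K V) (j : ℕ) : ℕ :=
  sInf {a | ∃ A ∈ 𝒜, Module.finrank K ↥A = a ∧ j ≤ Module.finrank K ↥(C ⊓ A)}


section Aux

lemma single_eq_simpleTensor (J : (i : Fin r) → Fin (n i)) :
    (Pi.single J (1 : K)) = simpleTensor (fun i t => if t = J i then (1 : K) else 0) := by
  funext J'
  by_cases h : J' = J
  · subst h
    simp [simpleTensor, Pi.single_apply]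
  · obtain ⟨i, hi⟩ := Function.ne_iff.1 h
    rw [Pi.single_apply, if_neg h]
    exact (Finset.prod_eq_zero (Finset.mem_univ i) (by simp [hi])).symm

lemma span_simple_eq_top :
    Submodule.span K {X : ((i : Fin r) → Fin (n i)) → K | ∃ u, X = simpleTensor u} = ⊤ := by
  rw [eq_top_iff]
  intro X _
  have hX : X = ∑ J, Pi.single J (X J) := by
    funext t
    rw [Finset.sum_apply]
    exact (Fintype.sum_pi_single t X).symm
  rw [hX]
  refine Submodule.sum_mem _ fun J _ => ?_
  have h1 : Pi.single J (X J) = X J • (Pi.single J (1 : K) : ((i : Fin r) → Fin (n i)) → K) := by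
    funext t
    by_cases h : t = J <;> simp [Pi.single_apply, h]
  rw [h1]
  exact Submodule.smul_mem _ _ (Submodule.subset_span ⟨_, single_eq_simpleTensor J⟩)

lemma isPerfect_top : IsPerfect (⊤ : Submodule K (((i : Fin r) → Fin (n i)) → K)) := by
  unfold IsPerfect
  rw [Submodule.top_coe, Set.univ_inter, span_simple_eq_top]

lemma exists_smul_simple (hr : 0 < r) (c : K) (u : ∀ i, Fin (n i) → K) :
    ∃ v, c • simpleTensor u = simpleTensor v := by
  refine ⟨Function.update u ⟨0, hr⟩ (fun t => c * u ⟨0, hr⟩ t), ?_⟩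
  funext J
  show c * ∏ i, u i (J i) = ∏ i, Function.update u ⟨0, hr⟩ (fun t => c * u ⟨0, hr⟩ t) i (J i)
  rw [← Finset.mul_prod_erase Finset.univ
        (fun i => Function.update u ⟨0, hr⟩ (fun t => c * u ⟨0, hr⟩ t) i (J i))
        (Finset.mem_univ ⟨0, hr⟩),
      ← Finset.mul_prod_erase Finset.univ (fun i => u i (J i)) (Finset.mem_univ ⟨0, hr⟩)]
  have hprod : ∏ i ∈ Finset.univ.erase ⟨0, hr⟩,
      Function.update u ⟨0, hr⟩ (fun t => c * u ⟨0, hr⟩ t) i (J i)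
      = ∏ i ∈ Finset.univ.erase ⟨0, hr⟩, u i (J i) :=
    Finset.prod_congr rfl fun i hi => by
      rw [Function.update_of_ne (Finset.ne_of_mem_erase hi)]
  rw [hprod, Function.update_self]
  ring

lemma minDist_le {C : Submodule K (((i : Fin r) → Fin (n i)) → K)}
    {X : ((i : Fin r) → Fin (n i)) → K} (hX : X ∈ C) (hX0 : X ≠ 0) :
    minDist C ≤ trank X :=
  Nat.sInf_le ⟨X, hX, hX0, rfl⟩

lemma trank_le_of_repr {X : ((i : Fin r) → Fin (n i)) → K} {R : ℕ}
    (u : Fin R → ∀ i, Fin (n i) → K) (h : X = ∑ s, simpleTensor (u s)) : trank X ≤ R :=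
  Nat.sInf_le ⟨u, h⟩

lemma trank_le_card (hr : 0 < r) (s : Finset (((i : Fin r) → Fin (n i)) → K))
    (hs : ∀ T ∈ s, ∃ u, T = simpleTensor u) {X : ((i : Fin r) → Fin (n i)) → K}
    (hX : X ∈ Submodule.span K (s : Set (((i : Fin r) → Fin (n i)) → K))) :
    trank X ≤ s.card := by
  obtain ⟨f, -, hf⟩ := Submodule.mem_span_finset.1 hX
  have hch : ∀ T ∈ s, ∃ w, f T • T = simpleTensor w := by
    intro T hT
    obtain ⟨u, hu⟩ := hs T hT
    obtain ⟨w, hw⟩ := exists_smul_simple hr (f T) u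
    exact ⟨w, by subst hu; exact hw⟩
  choose! v hv using hch
  refine trank_le_of_repr (fun t => v ((s.equivFin.symm t : {x // x ∈ s}) : _)) ?_
  calc X = ∑ T ∈ s, f T • T := hf.symm
    _ = ∑ x : {x // x ∈ s}, f ↑x • (↑x : ((i : Fin r) → Fin (n i)) → K) :=
        (Finset.sum_coe_sort s fun T => f T • T).symm
    _ = ∑ x : {x // x ∈ s}, simpleTensor (v ↑x) :=
        Finset.sum_congr rfl fun x _ => hv ↑x x.2
    _ = ∑ t, simpleTensor (v ↑(s.equivFin.symm t)) :=
        (Equiv.sum_comp s.equivFin.symm fun x => simpleTensor (v ↑x)).symm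

end Aux

/-- `t_j^ps(C) ≤ trk(C) + k − j` and `t_j^ps(C) ≥ d + j − 1`
for all `j ∈ {1,…,k}`. -/
theorem genW_perfect_bounds (C : Submodule K (((i : Fin r) → Fin (n i)) → K)) (hC : C ≠ ⊥)
    (j : ℕ) (hj : 1 ≤ j) (hjk : j ≤ Module.finrank K ↥C) :
    genW {A | IsPerfect A} C j ≤ trk C + Module.finrank K ↥C - j
      ∧ minDist C + j - 1 ≤ genW {A | IsPerfect A} C j := by
  classical
  have h1 : trk C ∈ {a | ∃ A : Submodule K (((i : Fin r) → Fin (n i)) → K),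
      IsPerfect A ∧ C ≤ A ∧ Module.finrank K ↥A = a} :=
    Nat.sInf_mem ⟨_, ⊤, isPerfect_top, le_top, rfl⟩
  obtain ⟨A₀, hA₀p, hA₀le, hA₀rk⟩ := h1
  have hCA₀ : C ⊓ A₀ = C := inf_eq_left.2 hA₀le
  have hS : trk C ∈ {a | ∃ A ∈ {A : Submodule K (((i : Fin r) → Fin (n i)) → K) | IsPerfect A},
      Module.finrank K ↥A = a ∧ j ≤ Module.finrank K ↥(C ⊓ A)} :=
    ⟨A₀, hA₀p, hA₀rk, by rw [hCA₀]; exact hjk⟩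
  have hub : genW {A | IsPerfect A} C j ≤ trk C := Nat.sInf_le hS
  constructor
  · omega
  · have hg : genW {A | IsPerfect A} C j ∈
        {a | ∃ A ∈ {A : Submodule K (((i : Fin r) → Fin (n i)) → K) | IsPerfect A},
          Module.finrank K ↥A = a ∧ j ≤ Module.finrank K ↥(C ⊓ A)} :=
      Nat.sInf_mem ⟨trk C, hS⟩
    obtain ⟨A, hAp, hArk, hAj⟩ := hg
    rw [← hArk]
    have hma : Module.finrank K ↥(C ⊓ A) ≤ Module.finrank K ↥A :=
      Submodule.finrank_mono inf_le_right
    by_cases hd2 : minDist C ≤ 1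
    · omega
    push_neg at hd2
    rcases Nat.eq_zero_or_pos r with hr0 | hr
    · -- r = 0 : the minimum distance is at most 1, contradiction
      exfalso
      subst hr0
      obtain ⟨X, hX, hX0⟩ := (Submodule.ne_bot_iff C).1 hC
      set J0 : (i : Fin 0) → Fin (n i) := fun i => i.elim0 with hJ0
      have hsub : ∀ J' : (i : Fin 0) → Fin (n i), J' = J0 :=
        fun J' => funext fun i => i.elim0
      have hXJ : X J0 ≠ 0 := by
        intro h0
        apply hX0
        funext J'
        rw [hsub J', h0]
        rfl
      have hY : ((X J0)⁻¹ • X) ∈ C := C.smul_mem _ hX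
      have hYval : ∀ J', ((X J0)⁻¹ • X) J' = 1 := by
        intro J'
        rw [hsub J']
        show (X J0)⁻¹ * X J0 = 1
        exact inv_mul_cancel₀ hXJ
      have hEq : (X J0)⁻¹ • X
          = ∑ _s : Fin 1, simpleTensor (fun i : Fin 0 => (i.elim0 : Fin (n i) → K)) := by
        rw [Fin.sum_univ_one]
        funext J'
        rw [hYval J']
        show (1 : K) = ∏ i : Fin 0, _
        rw [Finset.univ_eq_empty, Finset.prod_empty]
      have hY0 : (X J0)⁻¹ • X ≠ 0 := by
        intro h
        have := congrFun h J0
        rw [hYval J0] at this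
        exact one_ne_zero this
      have := (minDist_le hY hY0).trans (trank_le_of_repr _ hEq)
      omega
    · -- r ≥ 1 : main argument
      obtain ⟨b, hb_sub, hb_span, hb_li⟩ := exists_linearIndependent K
        ((A : Set (((i : Fin r) → Fin (n i)) → K)) ∩ {X | ∃ u, X = simpleTensor u})
      have hbA : Submodule.span K b = A := by rw [hb_span]; exact hAp.symm
      have hbfin : b.Finite := hb_li.setFinite
      set bs := hbfin.toFinset with hbs
      have hbs_coe : (bs : Set (((i : Fin r) → Fin (n i)) → K)) = b := hbfin.coe_toFinset
      have key : ∀ t : Finset (((i : Fin r) → Fin (n i)) → K), ↑t ⊆ b →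
          t.card ≤ minDist C - 1 →
          (C ⊓ A) ⊓ Submodule.span K (t : Set (((i : Fin r) → Fin (n i)) → K)) = ⊥ := by
        intro t ht hcard
        rw [Submodule.eq_bot_iff]
        intro X hX
        by_contra hX0
        have hX1 : minDist C ≤ trank X := minDist_le hX.1.1 hX0
        have hX2 : trank X ≤ t.card :=
          trank_le_card hr t (fun T hT => (hb_sub (ht hT)).2) hX.2
        omega
      by_cases hcase : bs.card ≤ minDist C - 1
      · exfalso
        have hAle : C ⊓ A ≤ Submodule.span K (bs : Set (((i : Fin r) → Fin (n i)) → K)) := by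
          rw [hbs_coe, hbA]; exact inf_le_right
        have h0 : C ⊓ A = ⊥ := by
          have hkey := key bs (by rw [hbs_coe]) hcase
          rwa [inf_eq_left.2 hAle] at hkey
        rw [h0, finrank_bot] at hAj
        omega
      · push_neg at hcase
        obtain ⟨t, hts, htc⟩ := Finset.exists_subset_card_eq hcase.le
        have htb : (t : Set (((i : Fin r) → Fin (n i)) → K)) ⊆ b := by
          rw [← hbs_coe]; exact Finset.coe_subset.2 hts
        have hdisj := key t htb htc.le
        have hli := (show LinearIndepOn K id b from hb_li).mono htb
        have hrank : Module.finrank K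
            ↥(Submodule.span K (t : Set (((i : Fin r) → Fin (n i)) → K))) = minDist C - 1 := by
          rw [finrank_span_finset_eq_card hli, htc]
        have hsup_le : (C ⊓ A) ⊔
            Submodule.span K (t : Set (((i : Fin r) → Fin (n i)) → K)) ≤ A :=
          sup_le inf_le_right (Submodule.span_le.2
            (htb.trans (hb_sub.trans Set.inter_subset_left)))
        have heq := Submodule.finrank_sup_add_finrank_inf_eq (C ⊓ A)
          (Submodule.span K (t : Set (((i : Fin r) → Fin (n i)) → K)))
        rw [hdisj, finrank_bot, add_zero, hrank] at heq
        have hle := Submodule.finrank_mono hsup_le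
        omega

end TensorCodes
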